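/- Let Φ : ℝ^d → ℝ^m be a feature map, ψ a probability distribution on ℝ^d, and f : ℝ^d → ℝ, with f and each component of Φ square-integrable under ψ. Let X_1, …, X_n be i.i.d. samples from ψ and let ξ be a random vector in ℝ^m, independent of (X_1,…,X_n), with independent components each of mean zero and variance σ_ξ². Then for every a ∈ ℝ^m, E[ ( (1/n)∑_{i=1}^n f(X_i) − ⟨a, (1/n)(∑_{i=1}^n Φ(X_i) + ξ)⟩ )² ] = ((n−1)/n) · ( E_{X∼ψ}[f(X)] − ⟨a, E_{X∼ψ}[Φ(X)]⟩ )² + (1/n) · E_{X∼ψ}[ ( f(X) − ⟨a, Φ(X)⟩ )² ] + (σ_ξ²/n²) ‖a‖₂². -/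

import Mathlib

open MeasureTheory ProbabilityTheory

lemma l2_mul_integrable {Ω : Type*} [MeasurableSpace Ω] {μ : Measure Ω} {f g : Ω → ℝ}
    (hf : MemLp f 2 μ) (hg : MemLp g 2 μ) :
    Integrable (fun ω => f ω * g ω) μ := by
  rw [← memLp_one_iff_integrable]
  have h := hg.smul (p := 2) (q := 2) (r := 1) hf
  exact h

lemma sum_sq_integral {Ω : Type*} [MeasurableSpace Ω] (μ : Measure Ω) [IsProbabilityMeasure μ]
    {n : ℕ} (Y : Fin n → Ω → ℝ)
    (hL2 : ∀ i, MemLp (Y i) 2 μ)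
    (hindep : ∀ i j, i ≠ j → IndepFun (Y i) (Y j) μ) :
    ∫ ω, (∑ i, Y i ω) ^ 2 ∂μ
      = (∑ i, ∫ ω, (Y i ω) ^ 2 ∂μ)
        + ∑ i, ∑ j ∈ Finset.univ.erase i, (∫ ω, Y i ω ∂μ) * (∫ ω, Y j ω ∂μ) := by
  have key : ∀ ω, (∑ i, Y i ω) ^ 2 = ∑ i, ∑ j, Y i ω * Y j ω := by
    intro ω; rw [sq, Finset.sum_mul_sum]
  simp_rw [key]
  rw [integral_finset_sum _ (fun i _ =>
    integrable_finset_sum _ (fun j _ => l2_mul_integrable (hL2 i) (hL2 j)))]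
  have hswap : ∀ i : Fin n, ∫ ω, ∑ j, Y i ω * Y j ω ∂μ = ∑ j, ∫ ω, Y i ω * Y j ω ∂μ :=
    fun i => integral_finset_sum _ (fun j _ => l2_mul_integrable (hL2 i) (hL2 j))
  simp_rw [hswap]
  rw [← Finset.sum_add_distrib]
  refine Finset.sum_congr rfl (fun i _ => ?_)
  rw [← Finset.add_sum_erase _ _ (Finset.mem_univ i)]
  congr 1
  · congr 1; ext ω; rw [← sq]
  · refine Finset.sum_congr rfl (fun j hj => ?_)
    have hij : i ≠ j := fun h => (Finset.ne_of_mem_erase hj) h.symm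
    exact (hindep i j hij).integral_mul_eq_mul_integral (hL2 i).aestronglyMeasurable
      (hL2 j).aestronglyMeasurable

/-- **Exact decomposition of the M2M mean squared error.** For i.i.d. samples
`X_1, …, X_n ∼ ψ` and noise `ξ` independent of the samples, with independent centered
components of variance `σξ²`, the mean squared error of the linear sketch-based
estimate of the empirical mean of `f` decomposes exactly into a squared-bias term,
a variance term and a noise term:
`E[((1/n)∑ᵢ f(Xᵢ) - ⟨a, (1/n)(∑ᵢ Φ(Xᵢ) + ξ)⟩)²]
  = ((n-1)/n)(E_ψ[f] - ⟨a, E_ψ[Φ]⟩)² + (1/n) E_ψ[(f - ⟨a, Φ⟩)²] + (σξ²/n²)‖a‖₂²`. -/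
theorem m2m_mse_decomposition
    {Ω : Type*} [MeasurableSpace Ω] (μ : Measure Ω) [IsProbabilityMeasure μ]
    (d m n : ℕ) (hn : 0 < n)
    (ψ : Measure (Fin d → ℝ)) [IsProbabilityMeasure ψ]
    (Φ : (Fin d → ℝ) → Fin m → ℝ) (f : (Fin d → ℝ) → ℝ)
    (hf : MemLp f 2 ψ) (hΦ : ∀ j, MemLp (fun x => Φ x j) 2 ψ)
    (X : Fin n → Ω → Fin d → ℝ)
    (hXmeas : ∀ i, Measurable (X i))
    (hXindep : iIndepFun X μ)
    (hXdist : ∀ i, Measure.map (X i) μ = ψ)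
    (ξ : Ω → Fin m → ℝ) (hξmeas : Measurable ξ)
    (σξ : ℝ)
    (hXξindep : IndepFun (fun ω i => X i ω) ξ μ)
    (hξindep : iIndepFun (fun j ω => ξ ω j) μ)
    (hξL2 : ∀ j, MemLp (fun ω => ξ ω j) 2 μ)
    (hξmean : ∀ j, ∫ ω, ξ ω j ∂μ = 0)
    (hξvar : ∀ j, ∫ ω, (ξ ω j) ^ 2 ∂μ = σξ ^ 2)
    (a : Fin m → ℝ) :
    ∫ ω, ((1 / (n : ℝ)) * ∑ i, f (X i ω)
        - ∑ j, a j * ((1 / (n : ℝ)) * (∑ i, Φ (X i ω) j + ξ ω j))) ^ 2 ∂μ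
      = (((n : ℝ) - 1) / (n : ℝ))
            * ((∫ x, f x ∂ψ) - ∑ j, a j * ∫ x, Φ x j ∂ψ) ^ 2
        + (1 / (n : ℝ)) * ∫ x, (f x - ∑ j, a j * Φ x j) ^ 2 ∂ψ
        + (σξ ^ 2 / (n : ℝ) ^ 2) * ∑ j, (a j) ^ 2 := by
  -- the centered function g
  set g : (Fin d → ℝ) → ℝ := fun x => f x - ∑ j, a j * Φ x j with hgdef
  have hg : MemLp g 2 ψ :=
    hf.sub (memLp_finset_sum Finset.univ (fun j _ => (hΦ j).const_mul (a j)))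
  -- measurable modification of g
  set g' : (Fin d → ℝ) → ℝ := hg.aestronglyMeasurable.mk g with hg'def
  have hg'sm : StronglyMeasurable g' := hg.aestronglyMeasurable.stronglyMeasurable_mk
  have hgg' : g =ᵐ[ψ] g' := hg.aestronglyMeasurable.ae_eq_mk
  have hg'mem : MemLp g' 2 ψ := hg.ae_eq hgg'
  -- the variables Y i = g' ∘ X i
  set Y : Fin n → Ω → ℝ := fun i ω => g' (X i ω) with hYdef
  have hYmeas : ∀ i, Measurable (Y i) := fun i => hg'sm.measurable.comp (hXmeas i)
  have hYae : ∀ i, (fun ω => g (X i ω)) =ᵐ[μ] Y i := by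
    intro i
    have h1 : ∀ᵐ y ∂(Measure.map (X i) μ), g y = g' y := by rw [hXdist i]; exact hgg'
    exact ae_of_ae_map (hXmeas i).aemeasurable h1
  have hYL2 : ∀ i, MemLp (Y i) 2 μ := by
    intro i
    have : MemLp g' 2 (Measure.map (X i) μ) := by rw [hXdist i]; exact hg'mem
    exact (memLp_map_measure_iff hg'sm.aestronglyMeasurable (hXmeas i).aemeasurable).mp this
  have hYmean : ∀ i, ∫ ω, Y i ω ∂μ = ∫ x, g x ∂ψ := by
    intro i
    rw [show (∫ ω, Y i ω ∂μ) = ∫ y, g' y ∂(Measure.map (X i) μ) from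
      (integral_map (hXmeas i).aemeasurable hg'sm.aestronglyMeasurable).symm, hXdist i]
    exact (integral_congr_ae hgg').symm
  have hYsq : ∀ i, ∫ ω, (Y i ω) ^ 2 ∂μ = ∫ x, (g x) ^ 2 ∂ψ := by
    intro i
    rw [show (∫ ω, (Y i ω) ^ 2 ∂μ) = ∫ y, (g' y) ^ 2 ∂(Measure.map (X i) μ) from
      (integral_map (hXmeas i).aemeasurable
        ((hg'sm.pow 2).aestronglyMeasurable)).symm, hXdist i]
    exact (integral_congr_ae (hgg'.mono fun x hx => by rw [hx])).symm
  have hYindep : ∀ i j, i ≠ j → IndepFun (Y i) (Y j) μ := fun i j hij =>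
    (hXindep.indepFun hij).comp hg'sm.measurable hg'sm.measurable
  -- the noise variables
  set Z : Fin m → Ω → ℝ := fun j ω => a j * ξ ω j with hZdef
  have hZL2 : ∀ j, MemLp (Z j) 2 μ := fun j => (hξL2 j).const_mul (a j)
  have hZmean : ∀ j, ∫ ω, Z j ω ∂μ = 0 := by
    intro j
    simp only [hZdef]
    rw [integral_const_mul, hξmean j, mul_zero]
  have hZindep : ∀ j k, j ≠ k → IndepFun (Z j) (Z k) μ := by
    intro j k hjk
    exact (hξindep.indepFun hjk).comp (measurable_const_mul (a j))
      (measurable_const_mul (a k))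
  -- T = ⟨a, ξ⟩ and S = ∑ Y i
  set T : Ω → ℝ := fun ω => ∑ j, Z j ω with hTdef
  set S : Ω → ℝ := fun ω => ∑ i, Y i ω with hSdef
  have hTL2 : MemLp T 2 μ := memLp_finset_sum Finset.univ (fun j _ => hZL2 j)
  have hSL2 : MemLp S 2 μ := memLp_finset_sum Finset.univ (fun i _ => hYL2 i)
  have hTmean : ∫ ω, T ω ∂μ = 0 := by
    simp only [hTdef]
    rw [integral_finset_sum _ (fun j _ => (hZL2 j).integrable one_le_two)]
    simp [hZmean]
  -- independence of S and T
  have hST : IndepFun S T μ := by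
    have h1 : Measurable (fun v : Fin n → Fin d → ℝ => ∑ i, g' (v i)) :=
      Finset.measurable_sum _ (fun i _ => hg'sm.measurable.comp (measurable_pi_apply i))
    have h2 : Measurable (fun v : Fin m → ℝ => ∑ j, a j * v j) :=
      Finset.measurable_sum _ (fun j _ => (measurable_pi_apply (X := fun _ : Fin m => ℝ) j).const_mul (a j))
    exact hXξindep.comp h1 h2
  -- cross term vanishes
  have hcross : ∫ ω, S ω * T ω ∂μ = 0 := by
    have := hST.integral_mul_eq_mul_integral hSL2.aestronglyMeasurable hTL2.aestronglyMeasurable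
    calc ∫ ω, S ω * T ω ∂μ = ∫ ω, (S * T) ω ∂μ := rfl
      _ = (∫ ω, S ω ∂μ) * ∫ ω, T ω ∂μ := this
      _ = 0 := by rw [hTmean, mul_zero]
  -- second moment of T
  have hTsq : ∫ ω, (T ω) ^ 2 ∂μ = σξ ^ 2 * ∑ j, (a j) ^ 2 := by
    simp only [hTdef]
    rw [sum_sq_integral μ Z hZL2 hZindep]
    have hd : ∀ j : Fin m, ∫ ω, (Z j ω) ^ 2 ∂μ = (a j) ^ 2 * σξ ^ 2 := by
      intro j
      simp only [hZdef, mul_pow]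
      rw [integral_const_mul, hξvar j]
    simp [hd, hZmean, Finset.mul_sum, mul_comm]
  -- second moment of S
  have hSsq : ∫ ω, (S ω) ^ 2 ∂μ
      = (n : ℝ) * ∫ x, (g x) ^ 2 ∂ψ + (n : ℝ) * ((n : ℝ) - 1) * (∫ x, g x ∂ψ) ^ 2 := by
    simp only [hSdef]
    rw [sum_sq_integral μ Y hYL2 hYindep]
    have h1 : ∑ i, ∫ ω, (Y i ω) ^ 2 ∂μ = (n : ℝ) * ∫ x, (g x) ^ 2 ∂ψ := by
      simp [hYsq, Finset.sum_const]
    have h2 : ∑ i : Fin n, ∑ j ∈ Finset.univ.erase i,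
        (∫ ω, Y i ω ∂μ) * (∫ ω, Y j ω ∂μ)
        = (n : ℝ) * ((n : ℝ) - 1) * (∫ x, g x ∂ψ) ^ 2 := by
      have : ∀ i : Fin n, ∑ j ∈ Finset.univ.erase i,
          (∫ ω, Y i ω ∂μ) * (∫ ω, Y j ω ∂μ) = ((n : ℝ) - 1) * (∫ x, g x ∂ψ) ^ 2 := by
        intro i
        rw [Finset.sum_congr rfl (fun j _ => by rw [hYmean i, hYmean j, ← sq]),
          Finset.sum_const, Finset.card_erase_of_mem (Finset.mem_univ i), Finset.card_univ,
          Fintype.card_fin, nsmul_eq_mul]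
        have hcast : ((n - 1 : ℕ) : ℝ) = (n : ℝ) - 1 := by
          rw [Nat.cast_sub hn, Nat.cast_one]
        rw [hcast]
      rw [Finset.sum_congr rfl (fun i _ => this i), Finset.sum_const, Finset.card_univ,
        Fintype.card_fin, nsmul_eq_mul]
      ring
    rw [h1, h2]
  -- rewrite the integrand
  have hptwise : ∀ ω, ((1 / (n : ℝ)) * ∑ i, f (X i ω)
        - ∑ j, a j * ((1 / (n : ℝ)) * (∑ i, Φ (X i ω) j + ξ ω j))) ^ 2
      = ((1 / (n : ℝ)) * ((∑ i, g (X i ω)) - ∑ j, a j * ξ ω j)) ^ 2 := by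
    intro ω
    congr 1
    have e1 : ∀ j : Fin m, a j * ((1 / (n : ℝ)) * (∑ i, Φ (X i ω) j + ξ ω j))
        = (1 / (n : ℝ)) * ∑ i, a j * Φ (X i ω) j + (1 / (n : ℝ)) * (a j * ξ ω j) := by
      intro j; rw [← Finset.mul_sum]; ring
    rw [Finset.sum_congr rfl (fun j _ => e1 j), Finset.sum_add_distrib,
      ← Finset.mul_sum, ← Finset.mul_sum, Finset.sum_comm]
    simp only [hgdef, Finset.sum_sub_distrib]
    ring
  have hae2 : ∀ᵐ ω ∂μ, ((1 / (n : ℝ)) * ∑ i, f (X i ω)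
        - ∑ j, a j * ((1 / (n : ℝ)) * (∑ i, Φ (X i ω) j + ξ ω j))) ^ 2
      = ((1 / (n : ℝ)) * (S ω - T ω)) ^ 2 := by
    have hall : ∀ᵐ ω ∂μ, ∀ i, g (X i ω) = Y i ω := ae_all_iff.mpr hYae
    filter_upwards [hall] with ω hω
    rw [hptwise ω]
    have hSeq : ∑ i, g (X i ω) = S ω := Finset.sum_congr rfl (fun i _ => hω i)
    rw [hSeq]
  rw [integral_congr_ae hae2]
  -- expand the square
  have hexp : ∀ ω, ((1 / (n : ℝ)) * (S ω - T ω)) ^ 2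
      = (1 / (n : ℝ)) ^ 2 * ((S ω) ^ 2 - 2 * (S ω * T ω) + (T ω) ^ 2) := by
    intro ω; ring
  simp_rw [hexp]
  rw [integral_const_mul]
  have hintS2 : Integrable (fun ω => (S ω) ^ 2) μ := hSL2.integrable_sq
  have hintT2 : Integrable (fun ω => (T ω) ^ 2) μ := hTL2.integrable_sq
  have hintST : Integrable (fun ω => S ω * T ω) μ := l2_mul_integrable hSL2 hTL2
  rw [integral_add (f := fun ω => S ω ^ 2 - 2 * (S ω * T ω)) (g := fun ω => T ω ^ 2)
      (hintS2.sub (hintST.const_mul 2)) hintT2,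
    integral_sub hintS2 (hintST.const_mul 2), integral_const_mul, hcross, hSsq, hTsq]
  -- compute the mean of g under ψ
  have hV : ∫ x, (g x) ^ 2 ∂ψ = ∫ x, (f x - ∑ j, a j * Φ x j) ^ 2 ∂ψ := rfl
  have hgmean : ∫ x, g x ∂ψ = (∫ x, f x ∂ψ) - ∑ j, a j * ∫ x, Φ x j ∂ψ := by
    simp only [hgdef]
    rw [integral_sub (hf.integrable one_le_two)
      (integrable_finset_sum _ (fun j _ => ((hΦ j).const_mul (a j)).integrable one_le_two)),
      integral_finset_sum _ (fun j _ => ((hΦ j).const_mul (a j)).integrable one_le_two)]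
    simp [integral_const_mul]
  rw [hgmean, hV]
  have hnne : (n : ℝ) ≠ 0 := Nat.cast_ne_zero.mpr hn.ne'
  field_simp
  ring
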